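/- Let K be a differential field of characteristic 0 and let A, B, C, D ∈ K[∂] with B, D nonzero. Write H = A·B^{-1} and K' = C·D^{-1} as elements of the skewfield of fractions K(∂) of K[∂]. Then sdeg(H·K') ≤ sdeg(H) + sdeg(K') and sdeg(H + K') ≤ sdeg(H) + sdeg(K'), where sdeg of a fraction is the minimal degree of a denominator in a right fractional decomposition. -/

import Mathlib

/-- A differential field: a field equipped with a derivation. -/
structure DiffField (K : Type*) [Field K] where
  d : K → K
  d_add : ∀ a b : K, d (a + b) = d a + d b
  d_mul : ∀ a b : K, d (a * b) = d a * b + a * d b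

namespace DiffField

variable {K : Type*} [Field K] (dk : DiffField K)

theorem d_zero : dk.d 0 = 0 := by
  have h := dk.d_add 0 0
  rw [add_zero] at h
  exact (left_eq_add.mp h)

theorem d_one : dk.d 1 = 0 := by
  have h := dk.d_mul 1 1
  simp only [mul_one, one_mul] at h
  exact (left_eq_add.mp h)

/-- The subfield of constants of a differential field. -/
def constants : Subfield K where
  carrier := {x | dk.d x = 0}
  zero_mem' := dk.d_zero
  one_mem' := dk.d_one
  add_mem' := by
    intro a b ha hb
    simp only [Set.mem_setOf_eq] at *
    rw [dk.d_add, ha, hb, add_zero]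
  neg_mem' := by
    intro a ha
    simp only [Set.mem_setOf_eq] at *
    have h := dk.d_add a (-a)
    rw [add_neg_cancel, dk.d_zero, ha, zero_add] at h
    exact h.symm
  mul_mem' := by
    intro a b ha hb
    simp only [Set.mem_setOf_eq] at *
    rw [dk.d_mul, ha, hb, zero_mul, mul_zero, add_zero]
  inv_mem' := by
    intro a ha
    simp only [Set.mem_setOf_eq] at *
    by_cases h : a = 0
    · rw [h, inv_zero]; exact dk.d_zero
    · have hm := dk.d_mul a a⁻¹
      rw [mul_inv_cancel₀ h, dk.d_one, ha, zero_mul, zero_add] at hm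
      exact (mul_eq_zero.mp hm.symm).resolve_left h

end DiffField

/-- The ring of differential operators `K[∂]`, axiomatized: a ring `R` together with
an embedding `C : K → R` of the coefficient field, a distinguished element `X`
playing the role of `∂` and satisfying `∂ ∘ f = f ∘ ∂ + f'`, such that every
element of `R` is, in a unique way, a "polynomial" `∑ᵢ C aᵢ * Xⁱ`
(uniqueness being encoded via the coefficient function `coeff`). -/
structure DiffOpRing (K : Type*) [Field K] (dk : DiffField K)
    (R : Type*) [Ring R] where
  C : K →+* R
  X : R
  C_inj : Function.Injective C
  comm : ∀ f : K, X * C f = C f * X + C (dk.d f)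
  coeff : R → ℕ → K
  coeff_add : ∀ a b i, coeff (a + b) i = coeff a i + coeff b i
  coeff_fin : ∀ a : R, ∃ n, ∀ m, n ≤ m → coeff a m = 0
  repr_eq : ∀ (a : R) (n : ℕ), (∀ m, n ≤ m → coeff a m = 0) →
      a = ∑ i ∈ Finset.range n, C (coeff a i) * X ^ i
  coeff_C_mul_X_pow : ∀ (f : K) (i j : ℕ),
      coeff (C f * X ^ i) j = if i = j then f else 0

namespace DiffOpRing

variable {K : Type*} [Field K] {dk : DiffField K} {R : Type*} [Ring R]

/-- The degree (order) of a differential operator; `deg 0 = 0` by convention. -/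
noncomputable def deg (dop : DiffOpRing K dk R) (a : R) : ℕ :=
  sSup {n | dop.coeff a n ≠ 0}

/-- `M` is a right least common multiple of `A` and `B`: it generates the
intersection of the principal right ideals generated by `A` and `B`. -/
def IsRightLcm (dop : DiffOpRing K dk R) (M A B : R) : Prop :=
  ∀ x : R, ((∃ p, x = A * p) ∧ (∃ q, x = B * q)) ↔ ∃ r, x = M * r

/-- `A` and `B` are left coprime: they have no common non-unit left divisor. -/
def LeftCoprime (dop : DiffOpRing K dk R) (A B : R) : Prop :=
  ∀ Q A' B' : R, A = Q * A' → B = Q * B' → IsUnit Q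

/-- `A` and `B` are right coprime: they have no common non-unit right divisor. -/
def RightCoprime (dop : DiffOpRing K dk R) (A B : R) : Prop :=
  ∀ A' B' E : R, A = A' * E → B = B' * E → IsUnit E

/-- `Q` is a left greatest common divisor of `A` and `B`. -/
def IsLeftGcd (dop : DiffOpRing K dk R) (Q A B : R) : Prop :=
  (∃ A', A = Q * A') ∧ (∃ B', B = Q * B') ∧
    ∀ D : R, (∃ A'', A = D * A'') → (∃ B'', B = D * B'') → ∃ E, Q = D * E

end DiffOpRing

/-- The singular degree of an element `H` of the skewfield of fractions `F` of the
differential operator ring `R` (with embedding `j : R →+* F`): the minimal degree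
of a denominator `B` in a right fractional decomposition `H = A * B⁻¹`. -/
noncomputable def sdeg {K : Type*} [Field K] {dk : DiffField K} {R : Type*} [Ring R]
    {F : Type*} [DivisionRing F] (dop : DiffOpRing K dk R) (j : R →+* F) (H : F) : ℕ :=
  sInf {n | ∃ A B : R, B ≠ 0 ∧ dop.deg B = n ∧ H = j A * (j B)⁻¹}

section Aux

namespace DiffOpRing

variable {K : Type*} [Field K] {dk : DiffField K} {R : Type*} [Ring R]
variable (dop : DiffOpRing K dk R)

theorem coeff_zero' (i : ℕ) : dop.coeff 0 i = 0 := by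
  have h := dop.coeff_add 0 0 i
  rw [add_zero] at h
  exact (left_eq_add.mp h)

theorem coeff_neg' (a : R) (i : ℕ) : dop.coeff (-a) i = - dop.coeff a i := by
  have h := dop.coeff_add a (-a) i
  rw [add_neg_cancel, dop.coeff_zero'] at h
  exact eq_neg_of_add_eq_zero_right h.symm

theorem coeff_sub' (a b : R) (i : ℕ) :
    dop.coeff (a - b) i = dop.coeff a i - dop.coeff b i := by
  rw [sub_eq_add_neg, dop.coeff_add, dop.coeff_neg', sub_eq_add_neg]

theorem coeff_sum {α : Type*} (s : Finset α) (f : α → R) (k : ℕ) :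
    dop.coeff (∑ i ∈ s, f i) k = ∑ i ∈ s, dop.coeff (f i) k := by
  classical
  induction s using Finset.induction with
  | empty => simp [dop.coeff_zero']
  | @insert a s h ih => rw [Finset.sum_insert h, Finset.sum_insert h, dop.coeff_add, ih]

theorem coeff_range_sum (n : ℕ) (f : ℕ → K) (k : ℕ) :
    dop.coeff (∑ i ∈ Finset.range n, dop.C (f i) * dop.X ^ i) k
      = if k < n then f k else 0 := by
  rw [dop.coeff_sum]
  simp only [dop.coeff_C_mul_X_pow]
  rw [Finset.sum_ite_eq' (Finset.range n) k f]
  simp [Finset.mem_range]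

theorem ext' {a b : R} (h : ∀ i, dop.coeff a i = dop.coeff b i) : a = b := by
  obtain ⟨na, ha⟩ := dop.coeff_fin a
  obtain ⟨nb, hb⟩ := dop.coeff_fin b
  have haN : ∀ m, max na nb ≤ m → dop.coeff a m = 0 :=
    fun m hm => ha m (le_trans (le_max_left _ _) hm)
  have hbN : ∀ m, max na nb ≤ m → dop.coeff b m = 0 :=
    fun m hm => hb m (le_trans (le_max_right _ _) hm)
  rw [dop.repr_eq a _ haN, dop.repr_eq b _ hbN]
  exact Finset.sum_congr rfl fun i _ => by rw [h i]

theorem eq_zero_iff' (a : R) : a = 0 ↔ ∀ i, dop.coeff a i = 0 := by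
  constructor
  · rintro rfl i; exact dop.coeff_zero' i
  · intro h; exact dop.ext' fun i => by rw [h i, dop.coeff_zero']

theorem coeff_C_mul (c : K) (a : R) (k : ℕ) :
    dop.coeff (dop.C c * a) k = c * dop.coeff a k := by
  obtain ⟨n, ha⟩ := dop.coeff_fin a
  have hr := dop.repr_eq a n ha
  have : dop.C c * a = ∑ i ∈ Finset.range n, dop.C (c * dop.coeff a i) * dop.X ^ i := by
    conv_lhs => rw [hr]
    rw [Finset.mul_sum]
    exact Finset.sum_congr rfl fun i _ => by rw [← mul_assoc, ← map_mul]
  rw [this, dop.coeff_range_sum]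
  split_ifs with h
  · rfl
  · rw [ha k (not_lt.mp h), mul_zero]

end DiffOpRing

end Aux
section Aux2

namespace DiffOpRing

variable {K : Type*} [Field K] {dk : DiffField K} {R : Type*} [Ring R]
variable (dop : DiffOpRing K dk R)

/-- left representation of `X * a`. -/
theorem X_mul_repr (a : R) (n : ℕ) (ha : ∀ m, n ≤ m → dop.coeff a m = 0) :
    dop.X * a = ∑ i ∈ Finset.range (n+1),
      dop.C ((match i with
        | 0 => dk.d (dop.coeff a 0)
        | (j+1) => dop.coeff a j + dk.d (dop.coeff a (j+1))) : K) * dop.X ^ i := by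
  have hr := dop.repr_eq a n ha
  have lhs1 : dop.X * a
      = (∑ i ∈ Finset.range n, dop.C (dop.coeff a i) * dop.X ^ (i+1))
        + ∑ i ∈ Finset.range n, dop.C (dk.d (dop.coeff a i)) * dop.X ^ i := by
    conv_lhs => rw [hr]
    rw [Finset.mul_sum, ← Finset.sum_add_distrib]
    refine Finset.sum_congr rfl fun i _ => ?_
    rw [← mul_assoc, dop.comm, add_mul, mul_assoc, ← pow_succ']
  have aux : ∑ i ∈ Finset.range n, dop.C (dk.d (dop.coeff a i)) * dop.X ^ i
      = (∑ i ∈ Finset.range n, dop.C (dk.d (dop.coeff a (i+1))) * dop.X ^ (i+1))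
        + dop.C (dk.d (dop.coeff a 0)) * dop.X ^ 0 := by
    have h1 : ∑ i ∈ Finset.range (n+1), dop.C (dk.d (dop.coeff a i)) * dop.X ^ i
        = ∑ i ∈ Finset.range n, dop.C (dk.d (dop.coeff a i)) * dop.X ^ i := by
      rw [Finset.sum_range_succ, ha n le_rfl, dk.d_zero, map_zero, zero_mul, add_zero]
    rw [← h1, Finset.sum_range_succ']
  rw [lhs1, aux, Finset.sum_range_succ']
  simp only []
  rw [← add_assoc, ← Finset.sum_add_distrib]
  congr 1
  refine Finset.sum_congr rfl fun i _ => ?_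
  rw [← add_mul, ← map_add]

theorem coeff_X_mul_zero (a : R) :
    dop.coeff (dop.X * a) 0 = dk.d (dop.coeff a 0) := by
  obtain ⟨n, ha⟩ := dop.coeff_fin a
  rw [dop.X_mul_repr a n ha, dop.coeff_range_sum]
  simp

theorem coeff_X_mul_succ (a : R) (k : ℕ) :
    dop.coeff (dop.X * a) (k+1) = dop.coeff a k + dk.d (dop.coeff a (k+1)) := by
  obtain ⟨n, ha⟩ := dop.coeff_fin a
  rw [dop.X_mul_repr a n ha, dop.coeff_range_sum]
  split_ifs with h
  · rfl
  · push_neg at h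
    rw [ha k (by omega), ha (k+1) (by omega), dk.d_zero, add_zero]

/-- `DegLE a n` means all coefficients above `n` vanish (degree ≤ n). -/
def DegLE (a : R) (n : ℕ) : Prop := ∀ k, n < k → dop.coeff a k = 0

theorem degLE_X_mul {a : R} {n : ℕ} (h : dop.DegLE a n) : dop.DegLE (dop.X * a) (n+1) := by
  intro k hk
  match k, hk with
  | (j+1), hk =>
    rw [dop.coeff_X_mul_succ, h j (by omega), h (j+1) (by omega), dk.d_zero, add_zero]

theorem coeff_X_mul_top {a : R} {n : ℕ} (h : dop.DegLE a n) :
    dop.coeff (dop.X * a) (n+1) = dop.coeff a n := by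
  rw [dop.coeff_X_mul_succ, h (n+1) (by omega), dk.d_zero, add_zero]

theorem degLE_C (c : K) : dop.DegLE (dop.C c) 0 := by
  intro k hk
  have : dop.C c = dop.C c * dop.X ^ 0 := by rw [pow_zero, mul_one]
  rw [this, dop.coeff_C_mul_X_pow]
  have : ¬ (0 = k) := by omega
  simp [this]

theorem coeff_C_zero (c : K) : dop.coeff (dop.C c) 0 = c := by
  have : dop.C c = dop.C c * dop.X ^ 0 := by rw [pow_zero, mul_one]
  rw [this, dop.coeff_C_mul_X_pow]
  simp

theorem Xpow_mul_degLE {b : R} {n : ℕ} (i : ℕ) (hb : dop.DegLE b n) :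
    dop.DegLE (dop.X ^ i * b) (n + i) ∧
      dop.coeff (dop.X ^ i * b) (n + i) = dop.coeff b n := by
  induction i with
  | zero => simpa [pow_zero] using hb
  | succ i ih =>
    have h1 : dop.X ^ (i+1) * b = dop.X * (dop.X ^ i * b) := by
      rw [pow_succ', mul_assoc]
    constructor
    · intro k hk
      rw [h1]
      have : n + (i+1) = (n+i) + 1 := by omega
      rw [this] at hk
      exact dop.degLE_X_mul ih.1 k hk
    · rw [h1, show n + (i+1) = (n+i) + 1 by omega, dop.coeff_X_mul_top ih.1, ih.2]

theorem mul_degLE {a b : R} {m n : ℕ} (ha : dop.DegLE a m) (hb : dop.DegLE b n) :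
    dop.DegLE (a * b) (m + n) ∧
      dop.coeff (a * b) (m + n) = dop.coeff a m * dop.coeff b n := by
  have hrep : a = ∑ i ∈ Finset.range (m+1), dop.C (dop.coeff a i) * dop.X ^ i :=
    dop.repr_eq a (m+1) (fun k hk => ha k (by omega))
  have key : ∀ k, dop.coeff (a * b) k
      = ∑ i ∈ Finset.range (m+1), dop.coeff a i * dop.coeff (dop.X ^ i * b) k := by
    intro k
    conv_lhs => rw [hrep]
    rw [Finset.sum_mul, dop.coeff_sum]
    exact Finset.sum_congr rfl fun i _ => by rw [mul_assoc, dop.coeff_C_mul]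
  constructor
  · intro k hk
    rw [key k]
    refine Finset.sum_eq_zero fun i hi => ?_
    have hi' : i ≤ m := by simpa [Nat.lt_succ_iff] using hi
    rw [(dop.Xpow_mul_degLE i hb).1 k (by omega), mul_zero]
  · rw [key (m+n)]
    rw [Finset.sum_eq_single m]
    · have := (dop.Xpow_mul_degLE m hb).2
      rw [show m + n = n + m by omega, this]
    · intro i hi hne
      have hi' : i ≤ m := by simpa [Nat.lt_succ_iff] using hi
      have : i < m := lt_of_le_of_ne hi' hne
      rw [(dop.Xpow_mul_degLE i hb).1 (m+n) (by omega), mul_zero]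
    · intro h
      exact absurd (Finset.self_mem_range_succ m) h

end DiffOpRing

end Aux2
section Aux3

namespace DiffOpRing

variable {K : Type*} [Field K] {dk : DiffField K} {R : Type*} [Ring R]
variable (dop : DiffOpRing K dk R)

theorem bddAbove_support (a : R) : BddAbove {n | dop.coeff a n ≠ 0} := by
  obtain ⟨N, hN⟩ := dop.coeff_fin a
  refine ⟨N, fun k hk => ?_⟩
  by_contra h
  exact hk (hN k (by omega))

theorem deg_le_of_degLE {a : R} {n : ℕ} (h : dop.DegLE a n) : dop.deg a ≤ n := by
  by_cases hne : {k | dop.coeff a k ≠ 0}.Nonempty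
  · exact csSup_le hne fun k hk => by
      by_contra hc
      exact hk (h k (by omega))
  · rw [Set.not_nonempty_iff_eq_empty] at hne
    rw [deg, hne, csSup_empty]
    exact Nat.zero_le n

theorem le_deg {a : R} {n : ℕ} (h : dop.coeff a n ≠ 0) : n ≤ dop.deg a :=
  le_csSup (dop.bddAbove_support a) h

theorem coeff_deg_ne_zero {a : R} (h : a ≠ 0) : dop.coeff a (dop.deg a) ≠ 0 := by
  have hne : {k | dop.coeff a k ≠ 0}.Nonempty := by
    by_contra hc
    rw [Set.not_nonempty_iff_eq_empty] at hc
    refine h (dop.ext' fun i => ?_)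
    have : i ∉ {k | dop.coeff a k ≠ 0} := by rw [hc]; exact Set.notMem_empty i
    simp only [Set.mem_setOf_eq, not_not] at this
    rw [this, dop.coeff_zero']
  exact Nat.sSup_mem hne (dop.bddAbove_support a)

theorem degLE_deg (a : R) : dop.DegLE a (dop.deg a) := by
  intro k hk
  by_contra h
  exact absurd (dop.le_deg h) (by omega)

theorem mul_ne_zero' {a b : R} (ha : a ≠ 0) (hb : b ≠ 0) :
    a * b ≠ 0 ∧ dop.deg (a * b) = dop.deg a + dop.deg b := by
  obtain ⟨h1, h2⟩ := dop.mul_degLE (dop.degLE_deg a) (dop.degLE_deg b)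
  have hlead : dop.coeff (a * b) (dop.deg a + dop.deg b) ≠ 0 := by
    rw [h2]
    exact mul_ne_zero (dop.coeff_deg_ne_zero ha) (dop.coeff_deg_ne_zero hb)
  constructor
  · intro h0
    rw [h0, dop.coeff_zero'] at hlead
    exact hlead rfl
  · exact le_antisymm (dop.deg_le_of_degLE h1) (dop.le_deg hlead)

theorem degLE_Xpow (i : ℕ) : dop.DegLE (dop.X ^ i) i := by
  intro k hk
  have : dop.X ^ i = dop.C 1 * dop.X ^ i := by rw [map_one, one_mul]
  rw [this, dop.coeff_C_mul_X_pow]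
  have : ¬ (i = k) := by omega
  simp [this]

theorem coeff_Xpow (i : ℕ) : dop.coeff (dop.X ^ i) i = 1 := by
  have : dop.X ^ i = dop.C 1 * dop.X ^ i := by rw [map_one, one_mul]
  rw [this, dop.coeff_C_mul_X_pow]
  simp

theorem deg_one' : dop.deg (1 : R) = 0 := by
  have := dop.degLE_Xpow 0
  rw [pow_zero] at this
  exact Nat.le_zero.mp (dop.deg_le_of_degLE this)

/-- existence of a right representation -/
theorem exists_right_repr (n : ℕ) : ∀ (a : R), dop.DegLE a n →
    ∃ g : ℕ → K, a = ∑ i ∈ Finset.range (n+1), dop.X ^ i * dop.C (g i) := by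
  induction n with
  | zero =>
    intro a h
    refine ⟨fun _ => dop.coeff a 0, ?_⟩
    have h2 : a = ∑ i ∈ Finset.range 1, dop.C (dop.coeff a i) * dop.X ^ i :=
      dop.repr_eq a 1 (fun m hm => h m (by omega))
    conv_lhs => rw [h2]
    simp [Finset.sum_range_one]
  | succ n ih =>
    intro a h
    set c := dop.coeff a (n+1) with hc
    set a' := a - dop.X ^ (n+1) * dop.C c with ha'
    have hmono : dop.DegLE (dop.X ^ (n+1) * dop.C c) (n+1) := by
      have := (dop.Xpow_mul_degLE (n+1) (dop.degLE_C c)).1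
      simpa using this
    have htop : dop.coeff (dop.X ^ (n+1) * dop.C c) (n+1) = c := by
      have := (dop.Xpow_mul_degLE (n+1) (dop.degLE_C c)).2
      simpa [dop.coeff_C_zero] using this
    have h' : dop.DegLE a' n := by
      intro k hk
      rw [ha', dop.coeff_sub']
      rcases Nat.lt_or_ge (n+1) k with hk1 | hk1
      · rw [h k hk1, hmono k hk1, sub_zero]
      · have : k = n+1 := by omega
        rw [this, htop, ← hc, sub_self]
    obtain ⟨g, hg⟩ := ih a' h'
    refine ⟨fun i => if i = n+1 then c else g i, ?_⟩
    have heq : ∑ i ∈ Finset.range (n+1), dop.X ^ i * dop.C (if i = n+1 then c else g i)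
        = ∑ i ∈ Finset.range (n+1), dop.X ^ i * dop.C (g i) := by
      refine Finset.sum_congr rfl fun i hi => ?_
      have : i ≠ n+1 := by have := Finset.mem_range.mp hi; omega
      rw [if_neg this]
    rw [Finset.sum_range_succ, heq, ← hg, ha']
    show a = a - dop.X ^ (n+1) * dop.C c + dop.X ^ (n+1) * dop.C (if n+1 = n+1 then c else g (n+1))
    rw [if_pos rfl, sub_add_cancel]

/-- uniqueness of right representations -/
theorem right_repr_zero : ∀ (n : ℕ) (g : ℕ → K),
    (∑ i ∈ Finset.range n, dop.X ^ i * dop.C (g i)) = 0 → ∀ i < n, g i = 0 := by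
  intro n
  induction n with
  | zero => intro g h i hi; omega
  | succ n ih =>
    intro g h
    have hsum := h
    rw [Finset.sum_range_succ] at hsum
    have hgn : g n = 0 := by
      have h1 := congrArg (fun r => dop.coeff r n) hsum.symm
      rw [dop.coeff_zero', dop.coeff_add, dop.coeff_sum] at h1
      have h2 : ∀ i ∈ Finset.range n, dop.coeff (dop.X ^ i * dop.C (g i)) n = 0 := by
        intro i hi
        have hi' := Finset.mem_range.mp hi
        have := (dop.Xpow_mul_degLE i (dop.degLE_C (g i))).1
        simpa using this n (by omega)
      rw [Finset.sum_eq_zero h2, zero_add] at h1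
      have htop : dop.coeff (dop.X ^ n * dop.C (g n)) n = g n := by
        have := (dop.Xpow_mul_degLE n (dop.degLE_C (g n))).2
        simpa [dop.coeff_C_zero] using this
      rw [htop] at h1
      exact h1.symm
    have hrest : (∑ i ∈ Finset.range n, dop.X ^ i * dop.C (g i)) = 0 := by
      rw [hgn, map_zero, mul_zero, add_zero] at hsum
      exact hsum
    intro i hi
    rcases Nat.lt_or_ge i n with h' | h'
    · exact ih g hrest i h'
    · have : i = n := by omega
      rw [this]; exact hgn

theorem degLE_right_sum (n : ℕ) (g : ℕ → K) :
    dop.DegLE (∑ i ∈ Finset.range (n+1), dop.X ^ i * dop.C (g i)) n := by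
  intro k hk
  rw [dop.coeff_sum]
  refine Finset.sum_eq_zero fun i hi => ?_
  have hi' := Finset.mem_range.mp hi
  have := (dop.Xpow_mul_degLE i (dop.degLE_C (g i))).1
  simpa using this k (by omega)

end DiffOpRing

end Aux3
section Aux4

namespace DiffOpRing

variable {K : Type*} [Field K] {dk : DiffField K} {R : Type*} [Ring R]
variable (dop : DiffOpRing K dk R)

theorem ore (P Q : R) (hP : P ≠ 0) (hQ : Q ≠ 0) :
    ∃ s t : R, s ≠ 0 ∧ t ≠ 0 ∧ P * s = Q * t ∧
      dop.deg s ≤ dop.deg Q ∧ dop.deg t ≤ dop.deg P := by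
  classical
  set m := dop.deg P with hm
  set n := dop.deg Q with hn
  have hPX : ∀ i : ℕ, i ≤ n → dop.DegLE (P * dop.X ^ i) (m + n) := by
    intro i hi k hk
    exact (dop.mul_degLE (dop.degLE_deg P) (dop.degLE_Xpow i)).1 k (by omega)
  have hQX : ∀ j : ℕ, j ≤ m → dop.DegLE (Q * dop.X ^ j) (m + n) := by
    intro j hj k hk
    exact (dop.mul_degLE (dop.degLE_deg Q) (dop.degLE_Xpow j)).1 k (by omega)
  choose β hβ using fun (i : Fin (n+1)) =>
    dop.exists_right_repr (m + n) (P * dop.X ^ (i : ℕ)) (hPX i (by omega))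
  choose γ hγ using fun (j : Fin (m+1)) =>
    dop.exists_right_repr (m + n) (Q * dop.X ^ (j : ℕ)) (hQX j (by omega))
  set M : Matrix (Fin (m+n+1)) (Fin (n+1) ⊕ Fin (m+1)) K :=
    fun k => Sum.elim (fun i => β i k) (fun j => - γ j k) with hM
  obtain ⟨v, hv0, hvK⟩ : ∃ v : (Fin (n+1) ⊕ Fin (m+1)) → K, v ≠ 0 ∧ M.mulVec v = 0 := by
    by_contra hcon
    push_neg at hcon
    have hinj : Function.Injective M.mulVecLin := by
      rw [← LinearMap.ker_eq_bot, LinearMap.ker_eq_bot']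
      intro v hv
      by_contra hne
      exact hcon v hne (by rw [← Matrix.mulVecLin_apply]; exact hv)
    have hle := LinearMap.finrank_le_finrank_of_injective hinj
    rw [Module.finrank_pi, Module.finrank_pi] at hle
    simp [Fintype.card_sum] at hle
    omega
  set g1 : ℕ → K := fun i => if h : i < n+1 then v (Sum.inl ⟨i, h⟩) else 0 with hg1
  set g2 : ℕ → K := fun j => if h : j < m+1 then v (Sum.inr ⟨j, h⟩) else 0 with hg2
  set s := ∑ i ∈ Finset.range (n+1), dop.X ^ i * dop.C (g1 i) with hs
  set t := ∑ j ∈ Finset.range (m+1), dop.X ^ j * dop.C (g2 j) with ht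
  have claim1 : P * s = ∑ k ∈ Finset.range (m+n+1),
      dop.X ^ k * dop.C (∑ i : Fin (n+1), β i k * g1 (i : ℕ)) := by
    rw [hs, Finset.mul_sum]
    rw [← Fin.sum_univ_eq_sum_range (fun i => P * (dop.X ^ i * dop.C (g1 i))) (n+1)]
    have step : ∀ i : Fin (n+1), P * (dop.X ^ (i:ℕ) * dop.C (g1 i))
        = ∑ k ∈ Finset.range (m+n+1), dop.X ^ k * dop.C (β i k * g1 (i:ℕ)) := by
      intro i
      rw [← mul_assoc, hβ i, Finset.sum_mul]
      exact Finset.sum_congr rfl fun k _ => by rw [mul_assoc, ← map_mul]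
    rw [Finset.sum_congr rfl fun i _ => step i, Finset.sum_comm]
    exact Finset.sum_congr rfl fun k _ => by rw [← Finset.mul_sum, ← map_sum]
  have claim2 : Q * t = ∑ k ∈ Finset.range (m+n+1),
      dop.X ^ k * dop.C (∑ j : Fin (m+1), γ j k * g2 (j : ℕ)) := by
    rw [ht, Finset.mul_sum]
    rw [← Fin.sum_univ_eq_sum_range (fun j => Q * (dop.X ^ j * dop.C (g2 j))) (m+1)]
    have step : ∀ j : Fin (m+1), Q * (dop.X ^ (j:ℕ) * dop.C (g2 j))
        = ∑ k ∈ Finset.range (m+n+1), dop.X ^ k * dop.C (γ j k * g2 (j:ℕ)) := by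
      intro j
      rw [← mul_assoc, hγ j, Finset.sum_mul]
      exact Finset.sum_congr rfl fun k _ => by rw [mul_assoc, ← map_mul]
    rw [Finset.sum_congr rfl fun j _ => step j, Finset.sum_comm]
    exact Finset.sum_congr rfl fun k _ => by rw [← Finset.mul_sum, ← map_sum]
  have hg1v : ∀ i : Fin (n+1), g1 (i : ℕ) = v (Sum.inl i) := by
    intro i
    rw [hg1]
    simp only [i.isLt, dif_pos, Fin.eta]
  have hg2v : ∀ j : Fin (m+1), g2 (j : ℕ) = v (Sum.inr j) := by
    intro j
    rw [hg2]
    simp only [j.isLt, dif_pos, Fin.eta]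
  have hPsQt : P * s = Q * t := by
    have hdiff : P * s - Q * t = 0 := by
      rw [claim1, claim2, ← Finset.sum_sub_distrib]
      refine Finset.sum_eq_zero fun k hk => ?_
      rw [← mul_sub, ← map_sub]
      have hk' := Finset.mem_range.mp hk
      have hzero := congrFun hvK ⟨k, hk'⟩
      simp only [Matrix.mulVec, dotProduct, Pi.zero_apply, Fintype.sum_sum_type, hM,
        Sum.elim_inl, Sum.elim_inr, neg_mul] at hzero
      have hcoef : (∑ i : Fin (n+1), β i k * g1 (i:ℕ))
          - ∑ j : Fin (m+1), γ j k * g2 (j:ℕ) = 0 := by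
        rw [sub_eq_add_neg, ← Finset.sum_neg_distrib]
        rw [Finset.sum_congr rfl fun (i : Fin (n+1)) _ => by rw [hg1v i]]
        rw [Finset.sum_congr rfl fun (j : Fin (m+1)) _ => by rw [hg2v j]]
        exact hzero
      rw [hcoef, map_zero, mul_zero]
    exact sub_eq_zero.mp hdiff
  have hs_ne : s ≠ 0 := by
    intro hs0
    have hQt0 : Q * t = 0 := by rw [← hPsQt, hs0, mul_zero]
    have ht0 : t = 0 := by
      by_contra ht0
      exact (dop.mul_ne_zero' hQ ht0).1 hQt0
    have hg10 : ∀ i < n+1, g1 i = 0 := dop.right_repr_zero (n+1) g1 hs0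
    have hg20 : ∀ j < m+1, g2 j = 0 := dop.right_repr_zero (m+1) g2 ht0
    apply hv0
    funext x
    rcases x with i | j
    · rw [Pi.zero_apply, ← hg1v i]; exact hg10 i i.isLt
    · rw [Pi.zero_apply, ← hg2v j]; exact hg20 j j.isLt
  have ht_ne : t ≠ 0 := by
    intro ht0
    have : P * s = 0 := by rw [hPsQt, ht0, mul_zero]
    exact (dop.mul_ne_zero' hP hs_ne).1 this
  refine ⟨s, t, hs_ne, ht_ne, hPsQt, ?_, ?_⟩
  · exact dop.deg_le_of_degLE (dop.degLE_right_sum n g1)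
  · exact dop.deg_le_of_degLE (dop.degLE_right_sum m g2)

end DiffOpRing

end Aux4

/-- Subadditivity of the singular degree: `sdeg (H·K) ≤ sdeg H + sdeg K` and
`sdeg (H + K) ≤ sdeg H + sdeg K` in the skewfield of fractions of `K[∂]`. -/
theorem sdeg_subadditive {K : Type*} [Field K] [CharZero K] (dk : DiffField K)
    {R : Type*} [Ring R] (dop : DiffOpRing K dk R)
    {F : Type*} [DivisionRing F] (j : R →+* F) (hj : Function.Injective j)
    (hfrac : ∀ H : F, ∃ A B : R, B ≠ 0 ∧ H = j A * (j B)⁻¹) :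
    ∀ H K' : F,
      sdeg dop j (H * K') ≤ sdeg dop j H + sdeg dop j K' ∧
      sdeg dop j (H + K') ≤ sdeg dop j H + sdeg dop j K' := by
  intro H K'
  classical
  have hne : ∀ G : F,
      {n | ∃ A B : R, B ≠ 0 ∧ dop.deg B = n ∧ G = j A * (j B)⁻¹}.Nonempty := by
    intro G
    obtain ⟨A, B, hB, hG⟩ := hfrac G
    exact ⟨dop.deg B, A, B, hB, rfl, hG⟩
  have hmem : ∀ G : F, ∃ A B : R, B ≠ 0 ∧ dop.deg B = sdeg dop j G ∧ G = j A * (j B)⁻¹ :=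
    fun G => Nat.sInf_mem (hne G)
  have hle : ∀ (G : F) (A' B' : R), B' ≠ 0 → G = j A' * (j B')⁻¹ →
      sdeg dop j G ≤ dop.deg B' :=
    fun G A' B' h1 h2 => Nat.sInf_le ⟨A', B', h1, rfl, h2⟩
  obtain ⟨A, B, hB, hdegB, hH⟩ := hmem H
  obtain ⟨C, D, hD, hdegD, hK⟩ := hmem K'
  have hjne : ∀ x : R, x ≠ 0 → j x ≠ 0 := fun x hx h0 => hx (hj (by rw [h0, map_zero]))
  have hR1 : (1 : R) ≠ 0 := fun h =>
    one_ne_zero (α := K) (dop.C_inj (by rw [map_one, map_zero, h]))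
  constructor
  · -- product
    by_cases hC : C = 0
    · have hK0 : K' = 0 := by rw [hK, hC, map_zero, zero_mul]
      have hkey : H * K' = j 0 * (j 1)⁻¹ := by rw [hK0, mul_zero, map_zero, zero_mul]
      have h0 := hle (H * K') 0 1 hR1 hkey
      rw [dop.deg_one'] at h0
      omega
    · obtain ⟨s, t, hs, ht, hst, hdegs, hdegt⟩ := dop.ore B C hB hC
      have hjB := hjne B hB
      have hjt := hjne t ht
      have hDt := dop.mul_ne_zero' hD ht
      have h1 : j B * j s = j C * j t := by rw [← map_mul, ← map_mul, hst]
      have h2 : (j B)⁻¹ * j C = j s * (j t)⁻¹ := by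
        have h3 : j B * (j s * (j t)⁻¹) = j C := by
          rw [← mul_assoc, h1, mul_assoc, mul_inv_cancel₀ hjt, mul_one]
        rw [← h3, ← mul_assoc, inv_mul_cancel₀ hjB, one_mul]
      have key : H * K' = j (A * s) * (j (D * t))⁻¹ := by
        rw [hH, hK, mul_assoc, ← mul_assoc ((j B)⁻¹) (j C) ((j D)⁻¹), h2,
          map_mul, map_mul, mul_inv_rev]
        simp only [mul_assoc]
      have hfin := hle (H * K') (A * s) (D * t) hDt.1 key
      calc sdeg dop j (H * K') ≤ dop.deg (D * t) := hfin
        _ = dop.deg D + dop.deg t := hDt.2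
        _ ≤ dop.deg D + dop.deg B := by omega
        _ = sdeg dop j H + sdeg dop j K' := by rw [hdegB, hdegD, add_comm]
  · -- sum
    obtain ⟨s, t, hs, ht, hst, hdegs, hdegt⟩ := dop.ore B D hB hD
    have hjs := hjne s hs
    have hjt := hjne t ht
    have hBs := dop.mul_ne_zero' hB hs
    have h1 : j B * j s = j D * j t := by rw [← map_mul, ← map_mul, hst]
    have hBinv : (j B)⁻¹ = j s * (j B * j s)⁻¹ := by
      rw [mul_inv_rev, ← mul_assoc, mul_inv_cancel₀ hjs, one_mul]
    have hDinv : (j D)⁻¹ = j t * (j B * j s)⁻¹ := by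
      rw [h1, mul_inv_rev, ← mul_assoc, mul_inv_cancel₀ hjt, one_mul]
    have key : H + K' = j (A * s + C * t) * (j (B * s))⁻¹ := by
      rw [hH, hK, hBinv, hDinv, map_add, map_mul, map_mul, map_mul, add_mul]
      simp only [mul_assoc]
    have hfin := hle (H + K') (A * s + C * t) (B * s) hBs.1 key
    calc sdeg dop j (H + K') ≤ dop.deg (B * s) := hfin
      _ = dop.deg B + dop.deg s := hBs.2
      _ ≤ dop.deg B + dop.deg D := by omega
      _ = sdeg dop j H + sdeg dop j K' := by rw [hdegB, hdegD]
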